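/- Suppose p(x; θ) is a superpolynomial satisfying the symmetric-Hecke condition T_i^bold p = t·p where T_i^bold p(x;θ) = (1-t) x_{i+1} (p(x;θ) - p(x s_i;θ))/(x_i - x_{i+1}) + T_i p(x s_i;θ). Then the substitution x_i = t·x_{i+1} yields T_i p(x^{(i)};θ) = t·p(x^{(i)};θ), i.e., the specialized polynomial is a t-eigenvector of the purely fermionic Hecke operator T_i. Dually, if T_i^bold p = -p then setting x_{i+1} = t·x_i gives T_i p(x^{(i)};θ) = -p(x^{(i)};θ). -/

import Mathlib

open Finset

noncomputable section

/-- Superpolynomials: polynomials in commuting variables x_1, x_2, … with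
coefficients in the span of the fermionic monomials φ_E. -/
abbrev SPoly (K : Type) [Field K] := Finset ℕ →₀ MvPolynomial ℕ K

variable {K : Type} [Field K]

/-- basis monomial φ_E -/
def phiP (K : Type) [Field K] (E : Finset ℕ) : SPoly K := Finsupp.single E 1

/-- operator determined by its values on the basis {φ_E} -/
def opOfP (v : Finset ℕ → SPoly K) : SPoly K →ₗ[MvPolynomial ℕ K] SPoly K :=
  Finsupp.lsum (MvPolynomial ℕ K) fun E =>
    LinearMap.toSpanSingleton (MvPolynomial ℕ K) (SPoly K) (v E)

/-- the image s_i E of E under the transposition swapping i, i+1 -/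
def swapSetP (i : ℕ) (E : Finset ℕ) : Finset ℕ := E.image (Equiv.swap i (i + 1))

/-- the purely fermionic Hecke operator T_i -/
def heckeTP (t : MvPolynomial ℕ K) (i : ℕ) : SPoly K →ₗ[MvPolynomial ℕ K] SPoly K :=
  opOfP fun E =>
    if i ∈ E then
      (if i + 1 ∈ E then -phiP K E else phiP K (swapSetP i E))
    else
      (if i + 1 ∈ E then (t - 1) • phiP K E + t • phiP K (swapSetP i E)
       else t • phiP K E)

/-- the swap x_i ↔ x_{i+1} of the commuting (bosonic) variables -/
def xswap (i : ℕ) (p : SPoly K) : SPoly K :=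
  Finsupp.mapRange (⇑(MvPolynomial.rename (Equiv.swap i (i + 1))))
    (map_zero _) p

/-- substitution x_i := q in the commuting variables -/
def xsubst (i : ℕ) (q : MvPolynomial ℕ K) (p : SPoly K) : SPoly K :=
  Finsupp.mapRange
    (⇑(MvPolynomial.aeval (R := K)
        (fun j => if j = i then q else MvPolynomial.X j)))
    (map_zero _) p


/-- constant polynomial -/
def Ct (t : K) : MvPolynomial ℕ K := MvPolynomial.C t

/-- variable x_j -/
def Xv (K : Type) [Field K] (j : ℕ) : MvPolynomial ℕ K := MvPolynomial.X j

namespace Spec19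

/-- mapRange of an algebra hom as a plain function on superpolynomials -/
def F (φ : MvPolynomial ℕ K →ₐ[K] MvPolynomial ℕ K) (p : SPoly K) : SPoly K :=
  Finsupp.mapRange ⇑φ (map_zero φ) p

lemma F_apply (φ : MvPolynomial ℕ K →ₐ[K] MvPolynomial ℕ K) (p : SPoly K) (s : Finset ℕ) :
    F φ p s = φ (p s) := Finsupp.mapRange_apply

lemma F_add (φ : MvPolynomial ℕ K →ₐ[K] MvPolynomial ℕ K) (p q : SPoly K) :
    F φ (p + q) = F φ p + F φ q := by
  ext s; simp [F_apply]

lemma F_sub (φ : MvPolynomial ℕ K →ₐ[K] MvPolynomial ℕ K) (p q : SPoly K) :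
    F φ (p - q) = F φ p - F φ q := by
  ext s; simp [F_apply]

lemma F_neg (φ : MvPolynomial ℕ K →ₐ[K] MvPolynomial ℕ K) (p : SPoly K) :
    F φ (-p) = -F φ p := by
  ext s; simp [F_apply]

lemma F_smul (φ : MvPolynomial ℕ K →ₐ[K] MvPolynomial ℕ K) (a : MvPolynomial ℕ K) (p : SPoly K) :
    F φ (a • p) = φ a • F φ p := by
  ext s; simp [F_apply, smul_eq_mul]

lemma F_single (φ : MvPolynomial ℕ K →ₐ[K] MvPolynomial ℕ K) (E : Finset ℕ) (a : MvPolynomial ℕ K) :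
    F φ (Finsupp.single E a) = Finsupp.single E (φ a) := Finsupp.mapRange_single

lemma F_phiP (φ : MvPolynomial ℕ K →ₐ[K] MvPolynomial ℕ K) (E : Finset ℕ) :
    F φ (phiP K E) = phiP K E := by
  simp [phiP, F_single]

lemma opOfP_single (v : Finset ℕ → SPoly K) (E : Finset ℕ) (a : MvPolynomial ℕ K) :
    opOfP v (Finsupp.single E a) = a • v E := by
  simp [opOfP]

lemma F_Ct (φ : MvPolynomial ℕ K →ₐ[K] MvPolynomial ℕ K) (t : K) : φ (Ct t) = Ct t := by
  simp [Ct, MvPolynomial.aeval_C]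

lemma F_zero (φ : MvPolynomial ℕ K →ₐ[K] MvPolynomial ℕ K) : F φ (0 : SPoly K) = 0 :=
  Finsupp.mapRange_zero

lemma F_hecke (φ : MvPolynomial ℕ K →ₐ[K] MvPolynomial ℕ K) (t : K) (i : ℕ) (q : SPoly K) :
    F φ (heckeTP (Ct t) i q) = heckeTP (Ct t) i (F φ q) := by
  induction q using Finsupp.induction with
  | zero => simp only [map_zero, F_zero]
  | single_add E a q _ _ ih =>
    rw [map_add, F_add, F_add, map_add, ih]
    congr 1
    rw [heckeTP, opOfP_single, F_single, opOfP_single, F_smul]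
    congr 1
    split_ifs <;>
      simp [F_add, F_smul, F_neg, F_phiP, F_Ct, map_sub]

lemma smul_cancel {a : MvPolynomial ℕ K} (ha : a ≠ 0) {m n : SPoly K}
    (h : a • m = a • n) : m = n := by
  refine Finsupp.ext fun s => ?_
  have := congrArg (fun z : SPoly K => z s) h
  simp only [Finsupp.smul_apply, smul_eq_mul] at this
  exact mul_left_cancel₀ ha this

lemma F_F (φ ψ : MvPolynomial ℕ K →ₐ[K] MvPolynomial ℕ K) (p : SPoly K) :
    F φ (F ψ p) = F (φ.comp ψ) p := by
  ext s; simp [F_apply]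

lemma F_congr {φ ψ : MvPolynomial ℕ K →ₐ[K] MvPolynomial ℕ K} (h : ∀ x, φ x = ψ x)
    (p : SPoly K) : F φ p = F ψ p := by
  ext s; simp [F_apply, h]

/-- the substitution function used by `xsubst` -/
def fsub (K : Type) [Field K] (i : ℕ) (q : MvPolynomial ℕ K) : ℕ → MvPolynomial ℕ K :=
  fun j => if j = i then q else MvPolynomial.X j

lemma xsubst_eq (i : ℕ) (q : MvPolynomial ℕ K) (p : SPoly K) :
    xsubst i q p = F (MvPolynomial.aeval (fsub K i q)) p := rfl

lemma xswap_eq (i : ℕ) (p : SPoly K) :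
    xswap i p = F (MvPolynomial.rename (Equiv.swap i (i + 1))) p := rfl

/-- composite substitution for part 1: x_i ↦ x_{i+1}, x_{i+1} ↦ t x_{i+1} -/
def gA (K : Type) [Field K] (t : K) (i : ℕ) : ℕ → MvPolynomial ℕ K :=
  fun j => if j = i then MvPolynomial.X (i + 1)
    else if j = i + 1 then Ct t * MvPolynomial.X (i + 1) else MvPolynomial.X j

/-- composite substitution for part 2: x_i ↦ t x_i, x_{i+1} ↦ x_i -/
def gB (K : Type) [Field K] (t : K) (i : ℕ) : ℕ → MvPolynomial ℕ K :=
  fun j => if j = i then Ct t * MvPolynomial.X i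
    else if j = i + 1 then MvPolynomial.X i else MvPolynomial.X j

lemma comp_swap_eq (g f : ℕ → MvPolynomial ℕ K) (i : ℕ)
    (h1 : g (i + 1) = f i) (h2 : g i = f (i + 1)) (h3 : ∀ j, j ≠ i → j ≠ i + 1 → g j = f j)
    (p : SPoly K) :
    F (MvPolynomial.aeval g) (xswap i p) = F (MvPolynomial.aeval f) p := by
  rw [xswap_eq, F_F]
  have hfun : g ∘ ⇑(Equiv.swap i (i + 1)) = f := by
    funext j
    rcases eq_or_ne j i with rfl | hji
    · simpa [Equiv.swap_apply_left] using h1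
    · rcases eq_or_ne j (i + 1) with rfl | hji'
      · simpa [Equiv.swap_apply_right] using h2
      · simpa [Equiv.swap_apply_of_ne_of_ne hji hji'] using h3 j hji hji'
  refine F_congr (fun x => ?_) p
  rw [AlgHom.comp_apply, MvPolynomial.aeval_rename, hfun]

end Spec19

open Spec19 MvPolynomial in
/-- if 𝐓_i p = t·p (the Demazure–Lusztig condition, written here
multiplied through by x_i - x_{i+1}), then the substitution x_i := t x_{i+1}
yields T_i p(x^{(i)};θ) = t·p(x^{(i)};θ); dually, if 𝐓_i p = -p, then the
substitution x_{i+1} := t x_i yields T_i p(x^{(i)};θ) = -p(x^{(i)};θ). -/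
theorem symmetric_specialization (K : Type) [Field K] (t : K) (N i : ℕ)
    (h1 : 1 ≤ i) (h2 : i < N) (p : SPoly K) :
    ((((1 - Ct t) * Xv K (i + 1)) • (p - xswap i p) +
        (Xv K i - Xv K (i + 1)) •
          heckeTP (Ct t) i (xswap i p) =
      (Ct t * (Xv K i - Xv K (i + 1))) • p) →
      heckeTP (Ct t) i
          (xsubst i (Ct t * Xv K (i + 1)) p) =
        Ct t • xsubst i (Ct t * Xv K (i + 1)) p) ∧
    ((((1 - Ct t) * Xv K (i + 1)) • (p - xswap i p) +
        (Xv K i - Xv K (i + 1)) •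
          heckeTP (Ct t) i (xswap i p) =
      (-(Xv K i - Xv K (i + 1))) • p) →
      heckeTP (Ct t) i
          (xsubst (i + 1) (Ct t * Xv K i) p) =
        -xsubst (i + 1) (Ct t * Xv K i) p) := by
  classical
  have hii : i + 1 ≠ i := Nat.succ_ne_self i
  have hii' : i ≠ i + 1 := (Nat.succ_ne_self i).symm
  have hXi1 : (Xv K (i + 1)) ≠ 0 := MvPolynomial.X_ne_zero _
  have hXi : (Xv K i) ≠ 0 := MvPolynomial.X_ne_zero _
  have hXX : Xv K i - Xv K (i + 1) ≠ 0 :=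
    sub_ne_zero.mpr (fun h => hii' (MvPolynomial.X_injective h))
  constructor
  · -- Part 1
    intro hyp
    by_cases ht : t = 1
    · subst ht
      have hC1 : Ct (1 : K) = 1 := by simp [Ct]
      rw [hC1, one_smul]
      simp only [hC1, sub_self, zero_mul, zero_smul, zero_add, one_mul] at hyp
      have hkey : heckeTP (Ct (1 : K)) i (xswap i p) = p := by
        rw [hC1]; exact smul_cancel hXX hyp
      have hswap : F (aeval (fsub K i (Ct (1:K) * Xv K (i + 1)))) (xswap i p)
          = F (aeval (fsub K i (Ct (1:K) * Xv K (i + 1)))) p := by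
        refine comp_swap_eq _ _ i ?_ ?_ (fun j hj hj' => ?_) p
        · simp [fsub, hii, hC1, Xv]
        · simp [fsub, hii', hC1, Xv]
        · simp [fsub, hj, hj']
      calc heckeTP (Ct (1:K)) i (xsubst i (Ct (1:K) * Xv K (i + 1)) p)
          = heckeTP (Ct (1:K)) i
              (F (aeval (fsub K i (Ct (1:K) * Xv K (i + 1)))) (xswap i p)) := by
            rw [hswap, xsubst_eq]
        _ = F (aeval (fsub K i (Ct (1:K) * Xv K (i + 1))))
              (heckeTP (Ct (1:K)) i (xswap i p)) := (F_hecke _ _ _ _).symm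
        _ = xsubst i (Ct (1:K) * Xv K (i + 1)) p := by rw [hkey, xsubst_eq]
    · -- t ≠ 1
      have h1t : (1 : MvPolynomial ℕ K) - Ct t ≠ 0 := by
        refine sub_ne_zero.mpr fun h => ht ?_
        have h' : (MvPolynomial.C (1:K) : MvPolynomial ℕ K) = MvPolynomial.C t := by
          rw [map_one]; exact h
        exact (MvPolynomial.C_injective _ _ h').symm
      have hBne : (1 - Ct t) * Xv K (i + 1) ≠ 0 := mul_ne_zero h1t hXi1
      set B : MvPolynomial ℕ K := (1 - Ct t) * Xv K (i + 1) with hB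
      set Sp : SPoly K := F (aeval (fsub K i (Ct t * Xv K (i + 1)))) p with hSp
      set r : SPoly K := F (aeval (gA K t i)) p with hr
      have hVσ : F (aeval (gA K t i)) (xswap i p) = Sp := by
        refine comp_swap_eq _ _ i ?_ ?_ (fun j hj hj' => ?_) p
        · simp [gA, fsub, hii, Xv]
        · simp [gA, fsub, hii', Xv]
        · simp [gA, fsub, hj, hj']
      have hgXi : aeval (gA K t i) (MvPolynomial.X i : MvPolynomial ℕ K)
          = MvPolynomial.X (i + 1) := by
        rw [aeval_X]; simp [gA]
      have hgXi1 : aeval (gA K t i) (MvPolynomial.X (i + 1) : MvPolynomial ℕ K)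
          = Ct t * MvPolynomial.X (i + 1) := by
        rw [aeval_X]; simp [gA, hii]
      have hgC : aeval (gA K t i) (Ct t) = Ct t := F_Ct _ t
      have hXv : ∀ j, Xv K j = MvPolynomial.X j := fun _ => rfl
      have e1 : (aeval (gA K t i)) ((1 - Ct t) * Xv K (i + 1)) = Ct t * B := by
        rw [hB]
        simp only [hXv, map_mul, map_sub, map_one, hgXi, hgXi1, hgC]
        ring
      have e2 : (aeval (gA K t i)) (Xv K i - Xv K (i + 1)) = B := by
        rw [hB]
        simp only [hXv, map_sub, hgXi, hgXi1]
        ring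
      have e3 : (aeval (gA K t i)) (Ct t * (Xv K i - Xv K (i + 1))) = Ct t * B := by
        rw [hB]
        simp only [hXv, map_mul, map_sub, hgXi, hgXi1, hgC]
        ring
      have h' := congrArg (F (aeval (gA K t i))) hyp
      simp only [F_add, F_smul, F_sub, F_hecke, hVσ, ← hr, e1, e2, e3] at h'
      rw [show (aeval (gA K t i)) B = Ct t * B from e1] at h'
      -- h' : (Ct t * B) • (r - Sp) + B • T = (Ct t * B) • r
      have h'' : B • heckeTP (Ct t) i Sp = B • (Ct t • Sp) := by
        have h2' := eq_sub_of_add_eq' h'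
        rw [← smul_sub, sub_sub_cancel] at h2'
        rw [h2', mul_comm, mul_smul]
      rw [xsubst_eq, ← hSp]
      exact smul_cancel hBne h''
  · -- Part 2
    intro hyp
    by_cases ht : t = 1
    · subst ht
      have hC1 : Ct (1 : K) = 1 := by simp [Ct]
      simp only [hC1, sub_self, zero_mul, zero_smul, zero_add, one_mul] at hyp
      rw [neg_smul, ← smul_neg] at hyp
      have hkey : heckeTP (Ct (1 : K)) i (xswap i p) = -p := by
        rw [hC1]; exact smul_cancel hXX hyp
      have hswap : F (aeval (fsub K (i + 1) (Ct (1:K) * Xv K i))) (xswap i p)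
          = F (aeval (fsub K (i + 1) (Ct (1:K) * Xv K i))) p := by
        refine comp_swap_eq _ _ i ?_ ?_ (fun j hj hj' => ?_) p
        · simp [fsub, hii', hC1, Xv]
        · simp [fsub, hii, hC1, Xv]
        · simp [fsub, hj, hj']
      calc heckeTP (Ct (1:K)) i (xsubst (i + 1) (Ct (1:K) * Xv K i) p)
          = heckeTP (Ct (1:K)) i
              (F (aeval (fsub K (i + 1) (Ct (1:K) * Xv K i))) (xswap i p)) := by
            rw [hswap, xsubst_eq]
        _ = F (aeval (fsub K (i + 1) (Ct (1:K) * Xv K i)))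
              (heckeTP (Ct (1:K)) i (xswap i p)) := (F_hecke _ _ _ _).symm
        _ = -xsubst (i + 1) (Ct (1:K) * Xv K i) p := by
            rw [hkey, F_neg, xsubst_eq]
    · -- t ≠ 1
      have h1t : (1 : MvPolynomial ℕ K) - Ct t ≠ 0 := by
        refine sub_ne_zero.mpr fun h => ht ?_
        have h' : (MvPolynomial.C (1:K) : MvPolynomial ℕ K) = MvPolynomial.C t := by
          rw [map_one]; exact h
        exact (MvPolynomial.C_injective _ _ h').symm
      have hBne : (1 - Ct t) * Xv K i ≠ 0 := mul_ne_zero h1t hXi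
      set B : MvPolynomial ℕ K := (1 - Ct t) * Xv K i with hB
      set Sp : SPoly K := F (aeval (fsub K (i + 1) (Ct t * Xv K i))) p with hSp
      set r : SPoly K := F (aeval (gB K t i)) p with hr
      have hVσ : F (aeval (gB K t i)) (xswap i p) = Sp := by
        refine comp_swap_eq _ _ i ?_ ?_ (fun j hj hj' => ?_) p
        · simp [gB, fsub, hii, hii', Xv]
        · simp [gB, fsub, hii', Xv]
        · simp [gB, fsub, hj, hj']
      have hgXi : aeval (gB K t i) (MvPolynomial.X i : MvPolynomial ℕ K)
          = Ct t * MvPolynomial.X i := by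
        rw [aeval_X]; simp [gB]
      have hgXi1 : aeval (gB K t i) (MvPolynomial.X (i + 1) : MvPolynomial ℕ K)
          = MvPolynomial.X i := by
        rw [aeval_X]; simp [gB, hii]
      have hgC : aeval (gB K t i) (Ct t) = Ct t := F_Ct _ t
      have hXv : ∀ j, Xv K j = MvPolynomial.X j := fun _ => rfl
      have e1 : (aeval (gB K t i)) ((1 - Ct t) * Xv K (i + 1)) = B := by
        rw [hB]
        simp only [hXv, map_mul, map_sub, map_one, hgXi, hgXi1, hgC]
      have e2 : (aeval (gB K t i)) (Xv K i - Xv K (i + 1)) = -B := by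
        rw [hB]
        simp only [hXv, map_sub, hgXi, hgXi1]
        ring
      have e3 : (aeval (gB K t i)) (-(Xv K i - Xv K (i + 1))) = B := by
        rw [hB]
        simp only [hXv, map_neg, map_sub, hgXi, hgXi1]
        ring
      have h' := congrArg (F (aeval (gB K t i))) hyp
      simp only [F_add, F_smul, F_sub, F_hecke, hVσ, ← hr, e1, e2, e3] at h'
      -- h' : B • (r - Sp) + (-B) • T = B • r
      have h'' : B • heckeTP (Ct t) i Sp = B • (-Sp) := by
        rw [neg_smul] at h'
        have h2' := eq_sub_of_add_eq' h'
        rw [← smul_sub, sub_sub_cancel] at h2'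
        have h3' : B • heckeTP (Ct t) i Sp = -(B • Sp) := by rw [← h2', neg_neg]
        rw [h3', smul_neg]
      rw [xsubst_eq, ← hSp]
      exact smul_cancel hBne h''
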